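/- Let r ≥ 1, let U ⊆ ℂ be open, let z ∈ U, let θ : U → M_r(ℂ) be differentiable at z with θ invertible in a neighborhood of z, and let Φ, A : U → M_r(ℂ) be differentiable at z. Define Φ₁ := θ⁻¹Φθ and A₁ := θ⁻¹Aθ + θ⁻¹θ′ near z, where ′ denotes the entrywise derivative. Then at z: Tr(Φ₁·A₁) + (1/2)·Tr(Φ₁·Φ₁) + (1/2)·Tr(Φ₁′) = Tr(Φ·A) + (1/2)·Tr(Φ·Φ) + (1/2)·Tr(Φ′) + Tr(θ⁻¹·Φ·θ′). -/

import Mathlib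

open Matrix

/-- Entrywise derivative of a matrix-valued function of one complex variable. -/
noncomputable def mderiv {r : ℕ} (f : ℂ → Matrix (Fin r) (Fin r) ℂ) (z : ℂ) :
    Matrix (Fin r) (Fin r) ℂ :=
  Matrix.of fun i j => deriv (fun w => f w i j) z

/-- Entrywise differentiability of a matrix-valued function at a point. -/
def MatDifferentiableAt {r : ℕ} (f : ℂ → Matrix (Fin r) (Fin r) ℂ) (z : ℂ) : Prop :=
  ∀ i j, DifferentiableAt ℂ (fun w => f w i j) z


lemma matDiffAt_mul {r : ℕ} {f g : ℂ → Matrix (Fin r) (Fin r) ℂ} {z : ℂ}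
    (hf : MatDifferentiableAt f z) (hg : MatDifferentiableAt g z) :
    MatDifferentiableAt (fun w => f w * g w) z := by
  intro i j
  have h : (fun w => (f w * g w) i j) = fun w => ∑ k, f w i k * g w k j := by
    funext w; simp [Matrix.mul_apply]
  rw [h]
  exact DifferentiableAt.fun_sum fun k _ => (hf i k).mul (hg k j)

lemma mderiv_mul {r : ℕ} {f g : ℂ → Matrix (Fin r) (Fin r) ℂ} {z : ℂ}
    (hf : MatDifferentiableAt f z) (hg : MatDifferentiableAt g z) :
    mderiv (fun w => f w * g w) z = mderiv f z * g z + f z * mderiv g z := by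
  ext i j
  have h : (fun w => (f w * g w) i j) = fun w => ∑ k, f w i k * g w k j := by
    funext w; simp [Matrix.mul_apply]
  simp only [mderiv, Matrix.of_apply, Matrix.add_apply, Matrix.mul_apply, h]
  rw [deriv_fun_sum (fun k _ => ((hf i k).fun_mul (hg k j)))]
  rw [← Finset.sum_add_distrib]
  congr 1; funext k
  rw [deriv_fun_mul (hf i k) (hg k j)]

lemma differentiableAt_det {r : ℕ} {f : ℂ → Matrix (Fin r) (Fin r) ℂ} {z : ℂ}
    (hf : MatDifferentiableAt f z) :
    DifferentiableAt ℂ (fun w => (f w).det) z := by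
  have h : (fun w => (f w).det)
      = fun w => ∑ σ : Equiv.Perm (Fin r), ((Equiv.Perm.sign σ : ℤ) : ℂ) * ∏ i, f w (σ i) i := by
    funext w; rw [Matrix.det_apply']
  rw [h]
  exact DifferentiableAt.fun_sum fun σ _ =>
    (differentiableAt_const _).mul (DifferentiableAt.fun_finsetProd fun i _ => hf (σ i) i)

lemma matDiffAt_inv {r : ℕ} {θ : ℂ → Matrix (Fin r) (Fin r) ℂ} {z : ℂ}
    (hθ : MatDifferentiableAt θ z) (h : IsUnit (θ z)) :
    MatDifferentiableAt (fun w => (θ w)⁻¹) z := by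
  intro i j
  have heq : (fun w => (θ w)⁻¹ i j)
      = fun w => ((θ w).det)⁻¹ * (Matrix.adjugate (θ w)) i j := by
    funext w
    rw [Matrix.inv_def]
    simp [Ring.inverse_eq_inv', Matrix.smul_apply, smul_eq_mul]
  rw [heq]
  have hd0 : (θ z).det ≠ 0 := by
    have := (Matrix.isUnit_iff_isUnit_det _).mp h
    exact IsUnit.ne_zero this
  refine ((differentiableAt_det hθ).inv hd0).mul ?_
  have h2 : (fun w => Matrix.adjugate (θ w) i j)
      = fun w => ((θ w).updateRow j (Pi.single i 1)).det := by
    funext w; rw [Matrix.adjugate_apply]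
  rw [h2]
  apply differentiableAt_det
  intro a b
  by_cases hja : a = j
  · subst hja
    simp only [Matrix.updateRow_apply, if_pos rfl]
    exact differentiableAt_const _
  · simp only [Matrix.updateRow_apply, if_neg hja]
    exact hθ a b

lemma mderiv_congr {r : ℕ} {f g : ℂ → Matrix (Fin r) (Fin r) ℂ} {z : ℂ}
    (h : f =ᶠ[nhds z] g) : mderiv f z = mderiv g z := by
  ext i j
  exact Filter.EventuallyEq.deriv_eq (h.mono fun w hw => show f w i j = g w i j by rw [hw])

lemma trace_conj {r : ℕ} {B T M : Matrix (Fin r) (Fin r) ℂ} (h : T * B = 1) :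
    (B * M * T).trace = M.trace := by
  rw [mul_assoc, Matrix.trace_mul_comm, mul_assoc, h, mul_one]


/-- with Φ₁ := θ⁻¹Φθ and A₁ := θ⁻¹Aθ + θ⁻¹θ′, at z,
Tr(Φ₁A₁) + ½Tr(Φ₁Φ₁) + ½Tr(Φ₁′) = Tr(ΦA) + ½Tr(ΦΦ) + ½Tr(Φ′) + Tr(θ⁻¹Φθ′). -/
theorem stmt4 (r : ℕ) (hr : 1 ≤ r) (U : Set ℂ) (hU : IsOpen U) (z : ℂ) (hz : z ∈ U)
    (θ Φ A : ℂ → Matrix (Fin r) (Fin r) ℂ)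
    (hθ : MatDifferentiableAt θ z)
    (hinv : ∀ᶠ w in nhds z, IsUnit (θ w))
    (hΦ : MatDifferentiableAt Φ z) (hA : MatDifferentiableAt A z)
    (Φ₁ A₁ : ℂ → Matrix (Fin r) (Fin r) ℂ)
    (hΦ₁ : ∀ w, Φ₁ w = (θ w)⁻¹ * Φ w * θ w)
    (hA₁ : ∀ w, A₁ w = (θ w)⁻¹ * A w * θ w + (θ w)⁻¹ * mderiv θ w) :
    trace (Φ₁ z * A₁ z) + (1 / 2 : ℂ) * trace (Φ₁ z * Φ₁ z)
        + (1 / 2 : ℂ) * trace (mderiv Φ₁ z)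
      = trace (Φ z * A z) + (1 / 2 : ℂ) * trace (Φ z * Φ z)
          + (1 / 2 : ℂ) * trace (mderiv Φ z)
          + trace ((θ z)⁻¹ * Φ z * mderiv θ z) := by
  have hu : IsUnit (θ z) := hinv.self_of_nhds
  have hdu : IsUnit (θ z).det := (Matrix.isUnit_iff_isUnit_det _).mp hu
  have hTB : θ z * (θ z)⁻¹ = 1 := Matrix.mul_nonsing_inv _ hdu
  have hBT : (θ z)⁻¹ * θ z = 1 := Matrix.nonsing_inv_mul _ hdu
  have hBd : MatDifferentiableAt (fun w => (θ w)⁻¹) z := matDiffAt_inv hθ hu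
  have hΦ₁fun : Φ₁ = fun w => ((θ w)⁻¹ * Φ w) * θ w := by funext w; exact hΦ₁ w
  have hΦ₁d : MatDifferentiableAt Φ₁ z := by
    rw [hΦ₁fun]
    exact matDiffAt_mul (matDiffAt_mul hBd hΦ) hθ
  have cancel : ∀ X : Matrix (Fin r) (Fin r) ℂ, θ z * ((θ z)⁻¹ * X) = X := by
    intro X; rw [← mul_assoc, hTB, one_mul]
  have tconj1 : ∀ M : Matrix (Fin r) (Fin r) ℂ,
      trace ((θ z)⁻¹ * (M * θ z)) = trace M := by
    intro M
    rw [Matrix.trace_mul_comm, mul_assoc, hTB, mul_one]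
  have tconj2 : ∀ M N : Matrix (Fin r) (Fin r) ℂ,
      trace ((θ z)⁻¹ * (M * (N * θ z))) = trace (M * N) := by
    intro M N
    rw [Matrix.trace_mul_comm]
    simp only [mul_assoc]
    rw [hTB, mul_one]
  -- eventual equation θ * Φ₁ = Φ * θ
  have hev : (fun w => θ w * Φ₁ w) =ᶠ[nhds z] fun w => Φ w * θ w := by
    filter_upwards [hinv] with w hw
    rw [hΦ₁ w, ← mul_assoc, ← mul_assoc,
      Matrix.mul_nonsing_inv _ ((Matrix.isUnit_iff_isUnit_det _).mp hw), one_mul]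
  have hkey : mderiv θ z * Φ₁ z + θ z * mderiv Φ₁ z
      = mderiv Φ z * θ z + Φ z * mderiv θ z := by
    rw [← mderiv_mul hθ hΦ₁d, ← mderiv_mul hΦ hθ]
    exact mderiv_congr hev
  have hθΦ₁' : θ z * mderiv Φ₁ z
      = mderiv Φ z * θ z + Φ z * mderiv θ z - mderiv θ z * Φ₁ z :=
    eq_sub_of_add_eq' hkey
  have hΦ₁' : mderiv Φ₁ z
      = (θ z)⁻¹ * (mderiv Φ z * θ z + Φ z * mderiv θ z - mderiv θ z * Φ₁ z) := by
    calc mderiv Φ₁ z = ((θ z)⁻¹ * θ z) * mderiv Φ₁ z := by rw [hBT, one_mul]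
      _ = (θ z)⁻¹ * (θ z * mderiv Φ₁ z) := by rw [mul_assoc]
      _ = _ := by rw [hθΦ₁']
  -- trace computations
  have t1 : trace (Φ₁ z * A₁ z)
      = trace (Φ z * A z) + trace ((θ z)⁻¹ * (Φ z * mderiv θ z)) := by
    rw [hΦ₁ z, hA₁ z]
    simp only [mul_add, mul_assoc, cancel]
    rw [trace_add, tconj2]
  have t2 : trace (Φ₁ z * Φ₁ z) = trace (Φ z * Φ z) := by
    rw [hΦ₁ z]
    simp only [mul_assoc, cancel]
    rw [tconj2]
  have t3 : trace (mderiv Φ₁ z) = trace (mderiv Φ z) := by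
    rw [hΦ₁', hΦ₁ z]
    simp only [mul_sub, mul_add, mul_assoc, cancel]
    rw [trace_sub, trace_add, tconj1]
    have e3 : trace ((θ z)⁻¹ * (mderiv θ z * ((θ z)⁻¹ * (Φ z * θ z))))
        = trace ((θ z)⁻¹ * (Φ z * mderiv θ z)) := by
      rw [Matrix.trace_mul_comm]
      simp only [mul_assoc]
      rw [hTB, mul_one, Matrix.trace_mul_comm]
      simp only [mul_assoc]
    rw [e3]
    ring
  rw [t1, t2, t3, ← mul_assoc]
  ring
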